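/- arXiv:1505.00546 — 2 statements merged into one kernel-verified Lean document; each statement's English description precedes it below -/
import Mathlib

section
/- Poisson integrals are Möbius harmonic: let M be an irreducible trace monoid with Bernoulli measure P on its boundary BM, f(u) = P(↑u), and φ ∈ L^∞(BM). Then λ(u) = (1/f(u)) ∫_{↑u} φ dP satisfies Σ_{c clique} (-1)^{|c|} f(c) λ(u·c) = 0 for all u ∈ M, and |λ(u)| ≤ ‖φ‖_∞ for all u. -/
open scoped Classical

variable {α : Type*}

/-- A clique of the independence graph. -/
def IsCliq (I : α → α → Prop) (c : Finset α) : Prop :=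
  ∀ a ∈ c, ∀ b ∈ c, a ≠ b → I a b

/-- Cartier–Foata admissibility `c → c'`. -/
def CFadm (I : α → α → Prop) (c c' : Finset α) : Prop :=
  ∀ b ∈ c', ∃ a ∈ c, ¬ I a b

/-- Parallelism of cliques: `c ∥ c'`. -/
def Par (I : α → α → Prop) (c c' : Finset α) : Prop :=
  ∀ a ∈ c, ∀ b ∈ c', I a b

/-- The commutation relation generating the trace monoid congruence. -/
def traceRel (I : α → α → Prop) : FreeMonoid α → FreeMonoid α → Prop :=
  fun x y => ∃ a b, I a b ∧ x = FreeMonoid.of a * FreeMonoid.of b ∧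
    y = FreeMonoid.of b * FreeMonoid.of a

/-- The trace monoid `M(Σ, I)`. -/
abbrev TM (I : α → α → Prop) := Con.Quotient (conGen (traceRel I))

/-- Canonical projection from the free monoid. -/
def mkTM (I : α → α → Prop) : FreeMonoid α →* TM I := Con.mk' _

/-- The image of a letter in the trace monoid. -/
def emb (I : α → α → Prop) (a : α) : TM I := mkTM I (FreeMonoid.of a)

/-- The trace associated to a clique. -/
noncomputable def ctr (I : α → α → Prop) (c : Finset α) : TM I :=
  mkTM I ((c.toList.map FreeMonoid.of).prod)

/-- The prefix (left divisibility) order on traces. -/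
def pref (I : α → α → Prop) (u v : TM I) : Prop := ∃ w, v = u * w

theorem pref_trans (I : α → α → Prop) {u v w : TM I} (h1 : pref I u v)
    (h2 : pref I v w) : pref I u w := by
  obtain ⟨a, rfl⟩ := h1; obtain ⟨b, rfl⟩ := h2; exact ⟨a * b, mul_assoc _ _ _⟩

/-- Nondecreasing sequences of traces. -/
def HSeq (I : α → α → Prop) := {x : ℕ → TM I // ∀ n, pref I (x n) (x (n + 1))}

/-- The domination preorder on nondecreasing sequences. -/
def preceq (I : α → α → Prop) (x y : HSeq I) : Prop := ∀ n, ∃ m, pref I (x.1 n) (y.1 m)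

instance hseqSetoid (I : α → α → Prop) : Setoid (HSeq I) where
  r x y := preceq I x y ∧ preceq I y x
  iseqv := by
    constructor
    · intro x; constructor <;> exact fun n => ⟨n, 1, (mul_one _).symm⟩
    · rintro x y ⟨h1, h2⟩; exact ⟨h2, h1⟩
    · rintro x y z ⟨h1, h2⟩ ⟨h3, h4⟩
      constructor
      · intro n; obtain ⟨m, hm⟩ := h1 n; obtain ⟨k, hk⟩ := h3 m
        exact ⟨k, pref_trans I hm hk⟩
      · intro n; obtain ⟨m, hm⟩ := h4 n; obtain ⟨k, hk⟩ := h2 m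
        exact ⟨k, pref_trans I hm hk⟩

/-- Generalized traces: the collapse of the preordered set of nondecreasing sequences. -/
def GT (I : α → α → Prop) := Quotient (hseqSetoid I)

/-- A finite trace, seen as a generalized trace. -/
def toGT (I : α → α → Prop) (u : TM I) : GT I :=
  Quotient.mk (hseqSetoid I) ⟨fun _ => u, fun _ => ⟨1, (mul_one u).symm⟩⟩

/-- `u` is a prefix of the generalized trace `ξ`. -/
def leT (I : α → α → Prop) (u : TM I) (ξ : GT I) : Prop :=
  Quotient.liftOn ξ (fun x => ∃ m, pref I u (x.1 m)) (by
    rintro x y ⟨hxy, hyx⟩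
    apply propext
    constructor
    · rintro ⟨m, hm⟩; obtain ⟨k, hk⟩ := hxy m; exact ⟨k, pref_trans I hm hk⟩
    · rintro ⟨m, hm⟩; obtain ⟨k, hk⟩ := hyx m; exact ⟨k, pref_trans I hm hk⟩)

/-- The boundary at infinity: generalized traces that are not finite traces. -/
def Bdry (I : α → α → Prop) := {ξ : GT I // ∀ u : TM I, ξ ≠ toGT I u}

/-- The elementary cylinder of base `u`. -/
def cylSet (I : α → α → Prop) (u : TM I) : Set (Bdry I) := {ξ | leT I u ξ.1}

/-- The σ-algebra generated by elementary cylinders. -/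
instance bdryMeasurableSpace (I : α → α → Prop) : MeasurableSpace (Bdry I) :=
  MeasurableSpace.generateFrom {s | ∃ u : TM I, s = cylSet I u}

namespace PoissonAux

variable {I : α → α → Prop}

variable {I : α → α → Prop}

lemma emb_comm {a b : α} (h : I a b) : emb I a * emb I b = emb I b * emb I a := by
  unfold emb
  rw [← map_mul, ← map_mul]
  exact (Con.eq _).mpr (ConGen.Rel.of _ _ ⟨a, b, h, rfl, rfl⟩)

/-- letter image used by the projection onto the pair `{a, b}`. -/
noncomputable def eab (a b : α) (x : α) : FreeMonoid α :=
  if x = a ∨ x = b then FreeMonoid.of x else 1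

/-- projection onto the pair `{a, b}` at word level. -/
noncomputable def pi (a b : α) : FreeMonoid α →* FreeMonoid α :=
  FreeMonoid.lift (eab a b)

lemma pi_invariant (hsymm : ∀ a b, I a b → I b a) (hirr : ∀ a, ¬ I a a)
    {a b : α} (hD : ¬ I a b) :
    ∀ x y, traceRel I x y → pi a b x = pi a b y := by
  rintro x y ⟨c, d, hcd, rfl, rfl⟩
  have hne : c ≠ d := fun h => hirr d (h ▸ hcd)
  simp only [map_mul, pi, FreeMonoid.lift_eval_of]
  by_cases hc : c = a ∨ c = b
  · by_cases hd : d = a ∨ d = b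
    · exfalso
      rcases hc with rfl | rfl
      · rcases hd with rfl | rfl
        · exact hne rfl
        · exact hD hcd
      · rcases hd with rfl | rfl
        · exact hD (hsymm _ _ hcd)
        · exact hne rfl
    · simp [eab, hd]
  · simp [eab, hc]

/-- projection as a hom on the trace monoid (for a dependent pair). -/
noncomputable def piT (hsymm : ∀ a b, I a b → I b a) (hirr : ∀ a, ¬ I a a)
    {a b : α} (hD : ¬ I a b) : TM I →* FreeMonoid α :=
  Con.lift _ (pi a b) (Con.conGen_le.mpr (fun x y h =>
    (Con.ker_rel _).mpr (pi_invariant hsymm hirr hD x y h)))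

lemma piT_mk (hsymm : ∀ a b, I a b → I b a) (hirr : ∀ a, ¬ I a a)
    {a b : α} (hD : ¬ I a b) (x : FreeMonoid α) :
    piT hsymm hirr hD (mkTM I x) = pi a b x :=
  Con.lift_mk' _ _


lemma head_lemma (hsymm : ∀ a b, I a b → I b a) (hirr : ∀ a, ¬ I a a) (a : α) :
    ∀ l : List α,
      (∀ b, ¬ I a b → ∃ s, pi a b (FreeMonoid.ofList l) = FreeMonoid.of a * s) →
      ∃ w, mkTM I (FreeMonoid.ofList l) = emb I a * w := by
  intro l
  induction l with
  | nil =>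
    intro h
    obtain ⟨s, hs⟩ := h a (hirr a)
    rw [FreeMonoid.ofList_nil, map_one] at hs
    exact absurd (congrArg FreeMonoid.toList hs) (by simp [FreeMonoid.toList_of_mul])
  | cons c l ih =>
    intro h
    by_cases hca : c = a
    · subst hca
      exact ⟨mkTM I (FreeMonoid.ofList l), by rw [FreeMonoid.ofList_cons, map_mul]; rfl⟩
    by_cases hIac : I a c
    · obtain ⟨w, hw⟩ := ih (fun b hD => by
        obtain ⟨s, hs⟩ := h b hD
        refine ⟨s, ?_⟩
        have hcb : c ≠ b := fun hh => hD (hh ▸ hIac)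
        rw [FreeMonoid.ofList_cons, map_mul] at hs
        have : pi a b (FreeMonoid.of c) = 1 := by
          simp [pi, FreeMonoid.lift_eval_of, eab, hca, hcb]
        rwa [this, one_mul] at hs)
      refine ⟨emb I c * w, ?_⟩
      rw [FreeMonoid.ofList_cons, map_mul, hw]
      show emb I c * (emb I a * w) = emb I a * (emb I c * w)
      rw [← mul_assoc, ← mul_assoc, emb_comm (hsymm a c hIac)]
    · obtain ⟨s, hs⟩ := h c hIac
      rw [FreeMonoid.ofList_cons, map_mul] at hs
      have hpc : pi a c (FreeMonoid.of c) = FreeMonoid.of c := by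
        simp [pi, FreeMonoid.lift_eval_of, eab]
      rw [hpc] at hs
      have := congrArg FreeMonoid.toList hs
      rw [FreeMonoid.toList_of_mul, FreeMonoid.toList_of_mul] at this
      exact absurd (List.head_eq_of_cons_eq this) hca

lemma pi_of_self (a b : α) : pi a b (FreeMonoid.of a) = FreeMonoid.of a := by
  simp [pi, FreeMonoid.lift_eval_of, eab]

lemma pi_of_self' (a b : α) : pi a b (FreeMonoid.of b) = FreeMonoid.of b := by
  simp [pi, FreeMonoid.lift_eval_of, eab]

lemma pi_of_other {a b c : α} (h1 : c ≠ a) (h2 : c ≠ b) :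
    pi a b (FreeMonoid.of c) = 1 := by
  simp [pi, FreeMonoid.lift_eval_of, eab, h1, h2]

/-- The cube lemma: two distinct letters extending a common prefix of `w`
are independent, and both can be appended. -/
lemma cube (hsymm : ∀ a b, I a b → I b a) (hirr : ∀ a, ¬ I a a)
    {a b : α} (hab : a ≠ b) {v w : TM I}
    (ha : pref I (v * emb I a) w) (hb : pref I (v * emb I b) w) :
    I a b ∧ pref I (v * emb I a * emb I b) w := by
  obtain ⟨s, hs⟩ := ha
  obtain ⟨t, ht⟩ := hb
  obtain ⟨xv, rfl⟩ := Con.mk'_surjective (c := conGen (traceRel I)) v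
  obtain ⟨xs, rfl⟩ := Con.mk'_surjective (c := conGen (traceRel I)) s
  obtain ⟨xt, rfl⟩ := Con.mk'_surjective (c := conGen (traceRel I)) t
  have E : mkTM I xv * emb I a * mkTM I xs = mkTM I xv * emb I b * mkTM I xt :=
    hs.symm.trans ht
  have hI : I a b := by
    by_contra hD
    have := congrArg (piT hsymm hirr hD) E
    simp only [map_mul] at this
    have ea : piT hsymm hirr hD (emb I a) = FreeMonoid.of a := by
      rw [emb, piT_mk]; exact pi_of_self a b
    have eb : piT hsymm hirr hD (emb I b) = FreeMonoid.of b := by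
      rw [emb, piT_mk]; exact pi_of_self' a b
    rw [ea, eb, mul_assoc, mul_assoc] at this
    have h2 := mul_left_cancel this
    have h3 := congrArg FreeMonoid.toList h2
    rw [FreeMonoid.toList_of_mul, FreeMonoid.toList_of_mul] at h3
    exact hab (List.head_eq_of_cons_eq h3)
  refine ⟨hI, ?_⟩
  -- show `a` can be taken first in `t`.
  have hhead : ∃ r, mkTM I xt = emb I a * r := by
    apply head_lemma hsymm hirr a (FreeMonoid.toList xt)
    intro b' hD
    have hb'b : b ≠ b' := fun hh => hD (hh ▸ hI)
    have := congrArg (piT hsymm hirr hD) E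
    simp only [map_mul] at this
    have ea : piT hsymm hirr hD (emb I a) = FreeMonoid.of a := by
      rw [emb, piT_mk]; exact pi_of_self a b'
    have eb : piT hsymm hirr hD (emb I b) = 1 := by
      rw [emb, piT_mk]; exact pi_of_other (Ne.symm hab) hb'b
    rw [ea, eb, mul_one, mul_assoc] at this
    have h2 := mul_left_cancel this
    rw [piT_mk, piT_mk] at h2
    exact ⟨pi a b' xs, h2.symm⟩
  obtain ⟨r, hr⟩ := hhead
  have hr' : (conGen (traceRel I)).mk' xt = emb I a * r := hr
  refine ⟨r, ?_⟩
  rw [ht, hr']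
  simp only [mul_assoc]
  rw [← mul_assoc (emb I b), ← emb_comm hI, mul_assoc]

lemma ctr_eq (c : Finset α) : ctr I c = (c.toList.map (emb I)).prod := by
  rw [ctr, map_list_prod, List.map_map]; rfl

lemma ctr_empty : ctr I (∅ : Finset α) = 1 := by
  simp [ctr_eq]

lemma ctr_insert {a : α} {c : Finset α} (h : a ∉ c)
    (hcl : IsCliq I (insert a c)) :
    ctr I (insert a c) = emb I a * ctr I c := by
  rw [ctr_eq, ctr_eq]
  have hperm : List.Perm ((insert a c).toList.map (emb I)) ((a :: c.toList).map (emb I)) :=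
    (Finset.toList_insert h).map _
  have hnd : (a :: c.toList).Nodup := by
    rw [List.nodup_cons]
    exact ⟨fun hm => h (Finset.mem_toList.mp hm), c.nodup_toList⟩
  have hpw : ((a :: c.toList).map (emb I)).Pairwise Commute := by
    apply List.Pairwise.map
    · intro x y hxy
      exact hxy
    apply List.Pairwise.imp_of_mem ?_ hnd
    intro x y hx hy hxy
    have hxm : x ∈ insert a c := by
      rcases List.mem_cons.mp hx with rfl | hx'
      · exact Finset.mem_insert_self _ _
      · exact Finset.mem_insert_of_mem (Finset.mem_toList.mp hx')
    have hym : y ∈ insert a c := by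
      rcases List.mem_cons.mp hy with rfl | hy'
      · exact Finset.mem_insert_self _ _
      · exact Finset.mem_insert_of_mem (Finset.mem_toList.mp hy')
    exact emb_comm (hcl x hxm y hym hxy)
  rw [← (hperm.symm).prod_eq' hpw, List.map_cons, List.prod_cons]

lemma ctr_erase {a : α} {c : Finset α} (ha : a ∈ c) (hcl : IsCliq I c) :
    ctr I c = emb I a * ctr I (c.erase a) := by
  conv_lhs => rw [← Finset.insert_erase ha]
  rw [ctr_insert (Finset.notMem_erase a c)]
  rw [Finset.insert_erase ha]; exact hcl

/-- All letters of a clique can be appended at once. -/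
lemma pref_ctr (hsymm : ∀ a b, I a b → I b a) (hirr : ∀ a, ¬ I a a)
    (c : Finset α) (hcl : IsCliq I c) :
    ∀ u w : TM I, pref I u w → (∀ a ∈ c, pref I (u * emb I a) w) →
      pref I (u * ctr I c) w := by
  induction c using Finset.induction_on with
  | empty => intro u w hu _; rw [ctr_empty, mul_one]; exact hu
  | @insert a c ha ih =>
    intro u w hu hall
    have hcl' : IsCliq I c := fun x hx y hy hxy =>
      hcl x (Finset.mem_insert_of_mem hx) y (Finset.mem_insert_of_mem hy) hxy
    have hua : pref I (u * emb I a) w := hall a (Finset.mem_insert_self _ _)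
    have h2 : ∀ b ∈ c, pref I (u * emb I a * emb I b) w := by
      intro b hb
      have hab : a ≠ b := fun hh => ha (hh ▸ hb)
      exact (cube hsymm hirr hab hua (hall b (Finset.mem_insert_of_mem hb))).2
    have := ih hcl' (u * emb I a) w hua h2
    rwa [ctr_insert ha hcl, ← mul_assoc]

end PoissonAux

namespace PoissonAux2

open PoissonAux

variable {I : α → α → Prop}

lemma pref_chain (x : HSeq I) {n m : ℕ} (h : n ≤ m) : pref I (x.1 n) (x.1 m) := by
  induction m, h using Nat.le_induction with
  | base => exact ⟨1, (mul_one _).symm⟩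
  | succ m hm ih => exact pref_trans I ih (x.2 m)

lemma leT_mk (v : TM I) (x : HSeq I) :
    leT I v (Quotient.mk (hseqSetoid I) x) ↔ ∃ m, pref I v (x.1 m) := Iff.rfl

lemma leT_mono {u v : TM I} (h : pref I u v) {ξ : GT I} (hv : leT I v ξ) :
    leT I u ξ := by
  induction ξ using Quotient.ind with
  | _ x => obtain ⟨m, hm⟩ := hv; exact ⟨m, pref_trans I h hm⟩

lemma exists_common (x : HSeq I) (g : α → TM I) (c : Finset α)
    (h : ∀ a ∈ c, ∃ m, pref I (g a) (x.1 m)) :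
    ∃ N, ∀ a ∈ c, pref I (g a) (x.1 N) := by
  classical
  induction c using Finset.induction_on with
  | empty => exact ⟨0, fun a ha => absurd ha (Finset.notMem_empty a)⟩
  | @insert a c ha ih =>
    obtain ⟨N1, hN1⟩ := ih (fun b hb => h b (Finset.mem_insert_of_mem hb))
    obtain ⟨m, hm⟩ := h a (Finset.mem_insert_self _ _)
    refine ⟨max N1 m, fun b hb => ?_⟩
    rcases Finset.mem_insert.mp hb with rfl | hb'
    · exact pref_trans I hm (pref_chain x (le_max_right _ _))
    · exact pref_trans I (hN1 b hb') (pref_chain x (le_max_left _ _))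

/-- The inclusion–exclusion identity, pointwise on the boundary. -/
lemma sign_sum [Fintype α] (hsymm : ∀ a b, I a b → I b a) (hirr : ∀ a, ¬ I a a)
    (u : TM I) (ξ : Bdry I) :
    (∑ c : Finset α,
      (if IsCliq I c ∧ leT I (u * ctr I c) ξ.1 then ((-1 : ℝ) ^ c.card) else 0)) = 0 := by
  classical
  by_cases hu : leT I u ξ.1
  case neg =>
    apply Finset.sum_eq_zero
    intro c _
    rw [if_neg]
    rintro ⟨_, h2⟩
    exact hu (leT_mono ⟨ctr I c, rfl⟩ h2)
  case pos =>
  obtain ⟨x, hx⟩ := Quotient.exists_rep ξ.1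
  set S : Finset α := Finset.univ.filter (fun a => leT I (u * emb I a) ξ.1) with hS
  -- the key equivalence
  have hiff : ∀ c : Finset α, (IsCliq I c ∧ leT I (u * ctr I c) ξ.1) ↔ c ⊆ S := by
    intro c
    constructor
    · rintro ⟨hcl, hle⟩ a ha
      rw [hS, Finset.mem_filter]
      refine ⟨Finset.mem_univ a, leT_mono ⟨ctr I (c.erase a), ?_⟩ hle⟩
      rw [ctr_erase ha hcl, mul_assoc]
    · intro hsub
      have hmem : ∀ a ∈ c, ∃ m, pref I (u * emb I a) (x.1 m) := by
        intro a ha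
        have := hsub ha
        rw [hS, Finset.mem_filter] at this
        rw [← hx] at this
        exact this.2
      obtain ⟨N1, hN1⟩ := exists_common x (fun a => u * emb I a) c hmem
      obtain ⟨m0, hm0⟩ : ∃ m, pref I u (x.1 m) := by rw [← hx] at hu; exact hu
      set N := max N1 m0 with hN
      have huN : pref I u (x.1 N) := pref_trans I hm0 (pref_chain x (le_max_right _ _))
      have hallN : ∀ a ∈ c, pref I (u * emb I a) (x.1 N) := fun a ha =>
        pref_trans I (hN1 a ha) (pref_chain x (le_max_left _ _))
      have hcl : IsCliq I c := by
        intro a ha b hb hab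
        exact (cube hsymm hirr hab (hallN a ha) (hallN b hb)).1
      refine ⟨hcl, ?_⟩
      rw [← hx]
      exact ⟨N, pref_ctr hsymm hirr c hcl u (x.1 N) huN hallN⟩
  -- `S` is nonempty
  have hSne : S ≠ ∅ := by
    obtain ⟨m0, hm0⟩ : ∃ m, pref I u (x.1 m) := by rw [← hx] at hu; exact hu
    have hne : ξ.1 ≠ toGT I u := ξ.2 u
    have hnn : ∃ n, ¬ pref I (x.1 n) u := by
      by_contra hcon
      push_neg at hcon
      apply hne
      rw [← hx]
      apply Quotient.sound
      exact ⟨fun n => ⟨0, hcon n⟩, fun n => ⟨m0, hm0⟩⟩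
    obtain ⟨n, hn⟩ := hnn
    set N := max m0 n with hNd
    have huN : pref I u (x.1 N) := pref_trans I hm0 (pref_chain x (le_max_left _ _))
    obtain ⟨w, hw⟩ := huN
    obtain ⟨lw, rfl⟩ := Con.mk'_surjective (c := conGen (traceRel I)) w
    rcases hlw : FreeMonoid.toList lw with _ | ⟨a, l'⟩
    · exfalso
      have hl1 : lw = 1 := by
        have := congrArg FreeMonoid.ofList hlw
        rwa [FreeMonoid.ofList_toList, FreeMonoid.ofList_nil] at this
      apply hn
      have hxNu : x.1 N = u := by
        rw [hw]
        show u * mkTM I lw = u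
        rw [hl1, map_one, mul_one]
      have hch : pref I (x.1 n) (x.1 N) := pref_chain x (le_max_right m0 n)
      rwa [hxNu] at hch
    · have hlw2 : (conGen (traceRel I)).mk' lw = emb I a * mkTM I (FreeMonoid.ofList l') := by
        have : lw = FreeMonoid.ofList (a :: l') := by
          have := congrArg FreeMonoid.ofList hlw
          rwa [FreeMonoid.ofList_toList] at this
        rw [this]
        show mkTM I (FreeMonoid.ofList (a :: l')) = _
        rw [FreeMonoid.ofList_cons, map_mul]; rfl
      have : a ∈ S := by
        rw [hS, Finset.mem_filter]
        refine ⟨Finset.mem_univ a, ?_⟩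
        rw [← hx]
        exact ⟨N, mkTM I (FreeMonoid.ofList l'), by rw [hw, hlw2, mul_assoc]⟩
      exact Finset.ne_empty_of_mem this
  -- conclude by the alternating-sign identity
  calc (∑ c : Finset α,
      (if IsCliq I c ∧ leT I (u * ctr I c) ξ.1 then ((-1 : ℝ) ^ c.card) else 0))
      = ∑ c : Finset α, (if c ⊆ S then ((-1 : ℝ) ^ c.card) else 0) := by
        refine Finset.sum_congr rfl fun c _ => ?_
        exact if_congr (hiff c) rfl rfl
    _ = ∑ c ∈ S.powerset, ((-1 : ℝ) ^ c.card) := by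
        rw [← Finset.sum_filter]
        congr 1
        ext t
        simp [Finset.mem_powerset]
    _ = ((∑ c ∈ S.powerset, ((-1 : ℤ) ^ c.card) : ℤ) : ℝ) := by push_cast; rfl
    _ = 0 := by
        rw [Finset.sum_powerset_neg_one_pow_card, if_neg hSne]; exact Int.cast_zero

end PoissonAux2

open MeasureTheory

/-- Poisson integrals of essentially bounded boundary functions are bounded
Möbius harmonic functions. -/
theorem poisson_integral_harmonic {α : Type*} [Fintype α] (I : α → α → Prop)
    (hsymm : ∀ a b, I a b → I b a) (hirr : ∀ a, ¬ I a a)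
    (hconn : ∀ a b : α, Relation.ReflTransGen (fun x y : α => ¬ I x y) a b)
    (P : Measure (Bdry I)) [IsProbabilityMeasure P]
    (hpos : ∀ u : TM I, 0 < P (cylSet I u))
    (hmult : ∀ u v : TM I, P (cylSet I (u * v)) = P (cylSet I u) * P (cylSet I v))
    (φ : Bdry I → ℝ) (hmeas : Measurable φ) (C : ℝ)
    (hbd : ∀ᵐ ξ ∂P, |φ ξ| ≤ C)
    (lam : TM I → ℝ)
    (hlam : ∀ u : TM I,
      lam u = (1 / (P (cylSet I u)).toReal) * ∫ ξ in cylSet I u, φ ξ ∂P) :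
    (∀ u : TM I,
      (∑ c : Finset α,
        if IsCliq I c then
          (-1 : ℝ) ^ c.card * (P (cylSet I (ctr I c))).toReal * lam (u * ctr I c)
        else 0) = 0) ∧
    (∀ u : TM I, |lam u| ≤ C) := by
  classical
  have mCyl : ∀ v : TM I, MeasurableSet (cylSet I v) := fun v =>
    MeasurableSpace.measurableSet_generateFrom ⟨v, rfl⟩
  have hbd' : ∀ᵐ ξ ∂P, ‖φ ξ‖ ≤ C := by
    filter_upwards [hbd] with ξ h
    rwa [Real.norm_eq_abs]
  have hint : Integrable φ P :=
    ⟨hmeas.aestronglyMeasurable, MeasureTheory.HasFiniteIntegral.of_bounded hbd'⟩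
  have hFpos : ∀ v : TM I, 0 < (P (cylSet I v)).toReal := fun v =>
    ENNReal.toReal_pos (hpos v).ne' (measure_ne_top P _)
  constructor
  · intro u
    have hterm : ∀ c : Finset α,
        (if IsCliq I c then
          (-1 : ℝ) ^ c.card * (P (cylSet I (ctr I c))).toReal * lam (u * ctr I c)
        else 0)
        = (1 / (P (cylSet I u)).toReal) *
          (if IsCliq I c then
            (-1 : ℝ) ^ c.card * ∫ ξ in cylSet I (u * ctr I c), φ ξ ∂P else 0) := by
      intro c
      by_cases hc : IsCliq I c
      · rw [if_pos hc, if_pos hc, hlam (u * ctr I c)]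
        have hmul : (P (cylSet I (u * ctr I c))).toReal
            = (P (cylSet I u)).toReal * (P (cylSet I (ctr I c))).toReal := by
          rw [hmult, ENNReal.toReal_mul]
        rw [hmul]
        have h1 := (hFpos u).ne'
        have h2 := (hFpos (ctr I c)).ne'
        field_simp
      · rw [if_neg hc, if_neg hc, mul_zero]
    rw [Finset.sum_congr rfl (fun c _ => hterm c), ← Finset.mul_sum]
    have hzero : (∑ c : Finset α,
        (if IsCliq I c then
          (-1 : ℝ) ^ c.card * ∫ ξ in cylSet I (u * ctr I c), φ ξ ∂P else 0)) = 0 := by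
      have hint2 : ∀ c : Finset α, Integrable
          (fun ξ => if IsCliq I c then
            (-1 : ℝ) ^ c.card * (cylSet I (u * ctr I c)).indicator φ ξ else 0) P := by
        intro c
        by_cases hc : IsCliq I c
        · simpa [hc] using ((hint.indicator (mCyl (u * ctr I c))).const_mul ((-1 : ℝ) ^ c.card))
        · simpa [hc] using integrable_zero (Bdry I) ℝ P
      have step1 : ∀ c : Finset α,
          (if IsCliq I c then
            (-1 : ℝ) ^ c.card * ∫ ξ in cylSet I (u * ctr I c), φ ξ ∂P else 0)
          = ∫ ξ, (if IsCliq I c then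
            (-1 : ℝ) ^ c.card * (cylSet I (u * ctr I c)).indicator φ ξ else 0) ∂P := by
        intro c
        by_cases hc : IsCliq I c
        · simp only [if_pos hc]
          rw [← integral_indicator (mCyl _), ← MeasureTheory.integral_const_mul]
        · simp [hc]
      rw [Finset.sum_congr rfl (fun c _ => step1 c),
        ← integral_finset_sum _ (fun c _ => hint2 c)]
      have hpt : ∀ ξ : Bdry I, (∑ c : Finset α,
          (if IsCliq I c then
            (-1 : ℝ) ^ c.card * (cylSet I (u * ctr I c)).indicator φ ξ else 0)) = 0 := by
        intro ξ
        have hrw : ∀ c : Finset α,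
            (if IsCliq I c then
              (-1 : ℝ) ^ c.card * (cylSet I (u * ctr I c)).indicator φ ξ else 0)
            = (if IsCliq I c ∧ leT I (u * ctr I c) ξ.1 then ((-1 : ℝ) ^ c.card) else 0) * φ ξ := by
          intro c
          by_cases hc : IsCliq I c
          · by_cases hm : leT I (u * ctr I c) ξ.1
            · have hmem : ξ ∈ cylSet I (u * ctr I c) := hm
              simp [hc, hm, Set.indicator_of_mem hmem]
            · have hmem : ξ ∉ cylSet I (u * ctr I c) := hm
              simp [hc, hm, Set.indicator_of_notMem hmem]
          · simp [hc]
        rw [Finset.sum_congr rfl (fun c _ => hrw c), ← Finset.sum_mul,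
          PoissonAux2.sign_sum hsymm hirr u ξ, zero_mul]
      have : (fun ξ : Bdry I => (∑ c : Finset α,
          (if IsCliq I c then
            (-1 : ℝ) ^ c.card * (cylSet I (u * ctr I c)).indicator φ ξ else 0))) =
          fun _ => (0 : ℝ) := funext hpt
      rw [this, integral_zero]
    rw [hzero, mul_zero]
  · intro u
    rw [hlam u]
    have hb2 : ‖∫ ξ in cylSet I u, φ ξ ∂P‖ ≤ C * (P (cylSet I u)).toReal :=
      norm_setIntegral_le_of_norm_le_const_ae (measure_lt_top P _) (ae_restrict_of_ae hbd')
    have hinv : (0 : ℝ) < 1 / (P (cylSet I u)).toReal := by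
      rw [one_div_pos]; exact hFpos u
    rw [abs_mul, abs_of_pos hinv]
    rw [Real.norm_eq_abs] at hb2
    calc (1 / (P (cylSet I u)).toReal) * |∫ ξ in cylSet I u, φ ξ ∂P|
        ≤ (1 / (P (cylSet I u)).toReal) * (C * (P (cylSet I u)).toReal) :=
          mul_le_mul_of_nonneg_left hb2 hinv.le
      _ = C := by
          rw [one_div, inv_mul_eq_div, mul_div_assoc,
            div_self (hFpos u).ne', mul_one]
end

section
/- Finite measures yield Möbius harmonic functions: if ν is a finite measure on (BM, F) and P is a Bernoulli measure with f(u) = P(↑u), then λ(u) = ν(↑u)/f(u) satisfies the Möbius harmonicity equation Σ_{c clique} (-1)^{|c|} f(c) λ(u·c) = 0 for all u ∈ M; equivalently, Σ_{c clique} (-1)^{|c|} ν(↑(u·c)) = 0 for all u ∈ M. -/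
open scoped Classical

variable {α : Type*}

namespace TraceAux

variable (I : α → α → Prop)

/-- projection of a list to the trace monoid -/
def mk (l : List α) : TM I := mkTM I (FreeMonoid.ofList l)

/-- congruence on lists -/
def Rel (l m : List α) : Prop := conGen (traceRel I) (FreeMonoid.ofList l) (FreeMonoid.ofList m)

lemma mk_eq_iff {l m : List α} : mk I l = mk I m ↔ Rel I l m := Con.eq _

lemma rel_refl (l : List α) : Rel I l l := (conGen (traceRel I)).refl _

lemma rel_symm {l m : List α} (h : Rel I l m) : Rel I m l := (conGen (traceRel I)).symm h

lemma rel_trans {l m k : List α} (h : Rel I l m) (h' : Rel I m k) : Rel I l k :=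
  (conGen (traceRel I)).trans h h'

lemma rel_append {l m l' m' : List α} (h : Rel I l m) (h' : Rel I l' m') :
    Rel I (l ++ l') (m ++ m') := by
  have := (conGen (traceRel I)).mul h h'
  simpa [Rel, FreeMonoid.ofList_append] using this

lemma mk_append (l l' : List α) : mk I (l ++ l') = mk I l * mk I l' := by
  rw [mk, FreeMonoid.ofList_append, map_mul]; rfl

lemma mk_nil : mk I [] = 1 := map_one _

lemma mk_single (a : α) : mk I [a] = emb I a := rfl

lemma mk_cons (a : α) (l : List α) : mk I (a :: l) = emb I a * mk I l := mk_append I [a] l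

lemma mk_surj (w : TM I) : ∃ l : List α, mk I l = w := by
  obtain ⟨x, hx⟩ := Con.mk'_surjective (c := conGen (traceRel I)) w
  exact ⟨FreeMonoid.toList x, by rw [mk, FreeMonoid.ofList_toList]; exact hx⟩

lemma emb_comm {a b : α} (h : I a b) : emb I a * emb I b = emb I b * emb I a := by
  have : mk I [a, b] = mk I [b, a] := by
    rw [mk_eq_iff]
    exact ConGen.Rel.of _ _ ⟨a, b, h, rfl, rfl⟩
  simpa [mk_cons, mk_single, mk_nil] using this

/-- the multiset of letters is an invariant -/
lemma rel_multiset_eq {l m : List α} (h : Rel I l m) : (l : Multiset α) = (m : Multiset α) := by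
  set f : FreeMonoid α →* Multiplicative (Multiset α) :=
    FreeMonoid.lift (fun a => Multiplicative.ofAdd ({a} : Multiset α)) with hf
  have key : conGen (traceRel I) ≤ Con.ker f := by
    apply Con.conGen_le.mpr
    rintro x y ⟨a, b, hab, rfl, rfl⟩
    show f _ = f _
    simp only [map_mul, hf, FreeMonoid.lift_eval_of]
    rw [← ofAdd_add, ← ofAdd_add, add_comm]
  have hfl : ∀ l : List α, f (FreeMonoid.ofList l) = Multiplicative.ofAdd (l : Multiset α) := by
    intro l
    induction l with
    | nil => simp [hf]
    | cons a t ih =>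
      have : FreeMonoid.ofList (a :: t) = FreeMonoid.of a * FreeMonoid.ofList t := rfl
      rw [this, map_mul, ih, hf, FreeMonoid.lift_eval_of, ← ofAdd_add]
      congr 1
  have : f (FreeMonoid.ofList l) = f (FreeMonoid.ofList m) := (Con.ker_rel f).mp (key h)
  rw [hfl, hfl] at this
  exact Multiplicative.ofAdd.injective this

lemma rel_mem_iff {l m : List α} (h : Rel I l m) (b : α) : b ∈ l ↔ b ∈ m := by
  have := rel_multiset_eq I h
  constructor <;> intro hb
  · have : b ∈ (m : Multiset α) := this ▸ (Multiset.mem_coe.mpr hb)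
    exact Multiset.mem_coe.mp this
  · have : b ∈ (l : Multiset α) := this ▸ (Multiset.mem_coe.mpr hb)
    exact Multiset.mem_coe.mp this

/-- `l'` is obtained from `l` by extracting an occurrence of `a` whose predecessors
all commute with `a`. -/
def Ext (a : α) (l l' : List α) : Prop :=
  ∃ l1 l2, l = l1 ++ a :: l2 ∧ (∀ b ∈ l1, I b a) ∧ l' = l1 ++ l2

lemma first_occ {a : α} : ∀ (l1 m1 l2 m2 : List α), l1 ++ a :: l2 = m1 ++ a :: m2 →
    a ∉ l1 → a ∉ m1 → l1 = m1 ∧ l2 = m2 := by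
  intro l1
  induction l1 with
  | nil =>
    intro m1 l2 m2 h h1 h2
    cases m1 with
    | nil => simpa using h
    | cons b t =>
      simp only [List.nil_append, List.cons_append, List.cons.injEq] at h
      exact absurd (h.1 ▸ (List.mem_cons_self (a := b) (l := t))) (by simpa [← h.1] using h2)
  | cons b t ih =>
    intro m1 l2 m2 h h1 h2
    cases m1 with
    | nil =>
      simp only [List.cons_append, List.nil_append, List.cons.injEq] at h
      exact absurd (h.1 ▸ (List.mem_cons_self (a := b) (l := t))) (by simpa [← h.1] using h1)
    | cons c s =>
      simp only [List.cons_append, List.cons.injEq] at h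
      obtain ⟨rfl, h⟩ := h
      have := ih s l2 m2 h (fun hx => h1 (List.mem_cons_of_mem _ hx))
        (fun hx => h2 (List.mem_cons_of_mem _ hx))
      exact ⟨by rw [this.1], this.2⟩

lemma ext_unique (hirr : ∀ a, ¬ I a a) {a : α} {l l' l'' : List α}
    (h1 : Ext I a l l') (h2 : Ext I a l l'') : l' = l'' := by
  obtain ⟨l1, l2, rfl, hl1, rfl⟩ := h1
  obtain ⟨m1, m2, he, hm1, rfl⟩ := h2
  have ha1 : a ∉ l1 := fun h => hirr a (hl1 a h)
  have ha2 : a ∉ m1 := fun h => hirr a (hm1 a h)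
  obtain ⟨rfl, rfl⟩ := first_occ l1 m1 l2 m2 he ha1 ha2
  rfl

lemma rel_of_congen {x y : FreeMonoid α} (h : conGen (traceRel I) x y) :
    Rel I (FreeMonoid.toList x) (FreeMonoid.toList y) := by
  simpa [Rel, FreeMonoid.ofList_toList] using h

lemma ext_transfer_of (hsymm : ∀ a b, I a b → I b a) {p q : α} (hpq : I p q) :
    ∀ a l', Ext I a [p, q] l' → ∃ m', Ext I a [q, p] m' ∧ Rel I l' m' := by
  rintro a l' ⟨l1, l2, he, h1, rfl⟩
  cases l1 with
  | nil =>
    simp only [List.nil_append, List.cons.injEq] at he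
    obtain ⟨rfl, rfl⟩ := he
    refine ⟨[q], ⟨[q], [], rfl, ?_, rfl⟩, rel_refl I _⟩
    intro b hb
    simp only [List.mem_singleton] at hb
    subst hb
    exact hsymm _ _ hpq
  | cons b t =>
    cases t with
    | nil =>
      simp only [List.cons_append, List.nil_append, List.cons.injEq] at he
      obtain ⟨rfl, rfl, rfl⟩ := he
      exact ⟨[p], ⟨[], [p], rfl, by simp, rfl⟩, rel_refl I _⟩
    | cons c s =>
      exfalso
      simp only [List.cons_append, List.cons.injEq] at he
      exact absurd he.2.2 (by simp)

lemma ext_transfer_mul {w x y z : FreeMonoid α}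
    (hwx : conGen (traceRel I) w x) (hyz : conGen (traceRel I) y z)
    (ihwx : ∀ a l', Ext I a (FreeMonoid.toList w) l' →
      ∃ m', Ext I a (FreeMonoid.toList x) m' ∧ Rel I l' m')
    (ihyz : ∀ a l', Ext I a (FreeMonoid.toList y) l' →
      ∃ m', Ext I a (FreeMonoid.toList z) m' ∧ Rel I l' m') :
    ∀ a l', Ext I a (FreeMonoid.toList (w * y)) l' →
      ∃ m', Ext I a (FreeMonoid.toList (x * z)) m' ∧ Rel I l' m' := by
  have hwx' := rel_of_congen I hwx
  have hyz' := rel_of_congen I hyz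
  rintro a l' ⟨l1, l2, he, h1, rfl⟩
  rw [FreeMonoid.toList_mul] at he
  rcases List.append_eq_append_iff.mp he with ⟨t, ht1, ht2⟩ | ⟨c, hc1, hc2⟩
  · -- a is extracted from the y part
    have hexty : Ext I a (FreeMonoid.toList y) (t ++ l2) :=
      ⟨t, l2, ht2, fun b hb => h1 b (by rw [ht1]; exact List.mem_append_right _ hb), rfl⟩
    obtain ⟨m2', ⟨s1, s2, hz, hs1, rfl⟩, hrel2⟩ := ihyz a _ hexty
    refine ⟨FreeMonoid.toList x ++ (s1 ++ s2),
      ⟨FreeMonoid.toList x ++ s1, s2, by simp [FreeMonoid.toList_mul, hz], ?_, by simp⟩, ?_⟩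
    · intro b hb
      rcases List.mem_append.mp hb with hb | hb
      · exact h1 b (by rw [ht1]; exact List.mem_append_left _ ((rel_mem_iff I hwx' b).mpr hb))
      · exact hs1 b hb
    · subst ht1
      rw [List.append_assoc]
      exact rel_append I hwx' hrel2
  · cases c with
    | nil =>
      simp only [List.append_nil] at hc1
      have hexty : Ext I a (FreeMonoid.toList y) l2 := ⟨[], l2, hc2.symm, by simp, rfl⟩
      obtain ⟨m2', ⟨s1, s2, hz, hs1, rfl⟩, hrel2⟩ := ihyz a _ hexty
      refine ⟨FreeMonoid.toList x ++ (s1 ++ s2),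
        ⟨FreeMonoid.toList x ++ s1, s2, by simp [FreeMonoid.toList_mul, hz], ?_, by simp⟩, ?_⟩
      · intro b hb
        rcases List.mem_append.mp hb with hb | hb
        · exact h1 b (by rw [← hc1]; exact (rel_mem_iff I hwx' b).mpr hb)
        · exact hs1 b hb
      · rw [← hc1]
        exact rel_append I hwx' hrel2
    | cons a' c' =>
      simp only [List.cons_append, List.cons.injEq] at hc2
      obtain ⟨rfl, rfl⟩ := hc2
      have hextw : Ext I a (FreeMonoid.toList w) (l1 ++ c') := ⟨l1, c', hc1, h1, rfl⟩
      obtain ⟨m1', ⟨s1, s2, hx, hs1, rfl⟩, hrel1⟩ := ihwx a _ hextw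
      refine ⟨(s1 ++ s2) ++ FreeMonoid.toList z,
        ⟨s1, s2 ++ FreeMonoid.toList z, by simp [FreeMonoid.toList_mul, hx], hs1, by simp⟩, ?_⟩
      rw [← List.append_assoc]
      exact rel_append I hrel1 hyz'

lemma ext_transfer (hsymm : ∀ a b, I a b → I b a) {x y : FreeMonoid α}
    (h : conGen (traceRel I) x y) :
    ∀ a l', Ext I a (FreeMonoid.toList x) l' →
      ∃ m', Ext I a (FreeMonoid.toList y) m' ∧ Rel I l' m' := by
  have main : ∀ {x y : FreeMonoid α}, ConGen.Rel (traceRel I) x y →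
      (∀ a l', Ext I a (FreeMonoid.toList x) l' →
        ∃ m', Ext I a (FreeMonoid.toList y) m' ∧ Rel I l' m') ∧
      (∀ a l', Ext I a (FreeMonoid.toList y) l' →
        ∃ m', Ext I a (FreeMonoid.toList x) m' ∧ Rel I l' m') := by
    intro x y h
    induction h with
    | of u v huv =>
      obtain ⟨p, q, hpq, rfl, rfl⟩ := huv
      have h1 : (FreeMonoid.toList (FreeMonoid.of p * FreeMonoid.of q)) = [p, q] := rfl
      have h2 : (FreeMonoid.toList (FreeMonoid.of q * FreeMonoid.of p)) = [q, p] := rfl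
      rw [h1, h2]
      exact ⟨ext_transfer_of I hsymm hpq, ext_transfer_of I hsymm (hsymm _ _ hpq)⟩
    | refl u => exact ⟨fun a l' h => ⟨l', h, rel_refl I _⟩, fun a l' h => ⟨l', h, rel_refl I _⟩⟩
    | symm _ ih => exact ⟨ih.2, ih.1⟩
    | trans _ _ ih1 ih2 =>
      constructor
      · intro a l' h
        obtain ⟨m', hm, hr⟩ := ih1.1 a l' h
        obtain ⟨k', hk, hr'⟩ := ih2.1 a m' hm
        exact ⟨k', hk, rel_trans I hr hr'⟩
      · intro a l' h
        obtain ⟨m', hm, hr⟩ := ih2.2 a l' h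
        obtain ⟨k', hk, hr'⟩ := ih1.2 a m' hm
        exact ⟨k', hk, rel_trans I hr hr'⟩
    | mul h1 h2 ih1 ih2 =>
      exact ⟨ext_transfer_mul I h1 h2 ih1.1 ih2.1,
        ext_transfer_mul I ((conGen (traceRel I)).symm h1) ((conGen (traceRel I)).symm h2)
          ih1.2 ih2.2⟩
  exact (main h).1

lemma ext_mk {a : α} {l l' : List α} (h : Ext I a l l') : mk I l = emb I a * mk I l' := by
  obtain ⟨l1, l2, rfl, h1, rfl⟩ := h
  induction l1 with
  | nil => simpa using (mk_cons I a l2)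
  | cons b t ih =>
    have hIb : I b a := h1 b (List.mem_cons_self)
    have ih' := ih (fun x hx => h1 x (List.mem_cons_of_mem _ hx))
    calc mk I ((b :: t) ++ a :: l2) = emb I b * mk I (t ++ a :: l2) := mk_cons ..
    _ = emb I b * (emb I a * mk I (t ++ l2)) := by rw [ih']
    _ = emb I a * (emb I b * mk I (t ++ l2)) := by
        rw [← mul_assoc, ← mul_assoc, emb_comm I hIb]
    _ = emb I a * mk I ((b :: t) ++ l2) := by rw [← mk_cons]; rfl

lemma dvd_ext (hsymm : ∀ a b, I a b → I b a) {a : α} {l : List α} {w : TM I}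
    (h : mk I l = emb I a * w) : ∃ l', Ext I a l l' ∧ mk I l' = w := by
  obtain ⟨m, rfl⟩ := mk_surj I w
  have heq : mk I l = mk I (a :: m) := by rw [mk_cons]; exact h
  have hrel : Rel I l (a :: m) := (mk_eq_iff I).mp heq
  have hrel' : conGen (traceRel I) (FreeMonoid.ofList (a :: m)) (FreeMonoid.ofList l) :=
    (conGen (traceRel I)).symm hrel
  have hext : Ext I a (FreeMonoid.toList (FreeMonoid.ofList (a :: m))) m :=
    ⟨[], m, by simp [FreeMonoid.toList_ofList], by simp, by simp⟩
  obtain ⟨l', hl', hrel2⟩ := ext_transfer I hsymm hrel' a m hext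
  rw [FreeMonoid.toList_ofList] at hl'
  exact ⟨l', hl', (mk_eq_iff I).mpr (rel_symm I hrel2)⟩

lemma cancel_letter (hsymm : ∀ a b, I a b → I b a) (hirr : ∀ a, ¬ I a a) {a : α}
    {u v : TM I} (h : emb I a * u = emb I a * v) : u = v := by
  obtain ⟨lu, rfl⟩ := mk_surj I u
  obtain ⟨lv, rfl⟩ := mk_surj I v
  have h' : mk I (a :: lu) = emb I a * mk I lv := by rw [mk_cons]; exact h
  obtain ⟨l', hext, hl'⟩ := dvd_ext I hsymm h'
  have htriv : Ext I a (a :: lu) lu := ⟨[], lu, rfl, by simp, rfl⟩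
  have := ext_unique I hirr hext htriv
  rw [← hl', this]

lemma cancel_left (hsymm : ∀ a b, I a b → I b a) (hirr : ∀ a, ¬ I a a)
    {u v w : TM I} (h : u * v = u * w) : v = w := by
  obtain ⟨l, rfl⟩ := mk_surj I u
  induction l with
  | nil => simpa [mk_nil] using h
  | cons a t ih =>
    rw [mk_cons, mul_assoc, mul_assoc] at h
    exact ih (cancel_letter I hsymm hirr h)

lemma two_letter (hsymm : ∀ a b, I a b → I b a) (hirr : ∀ a, ¬ I a a) {a b : α}
    (hab : a ≠ b) {w : TM I} (ha : ∃ s, w = emb I a * s) (hb : ∃ t, w = emb I b * t) :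
    I a b ∧ ∃ r, w = emb I a * (emb I b * r) := by
  obtain ⟨l, rfl⟩ := mk_surj I w
  obtain ⟨s, hs⟩ := ha
  obtain ⟨t, ht⟩ := hb
  obtain ⟨la, hexta, -⟩ := dvd_ext I hsymm hs
  obtain ⟨lb, hextb, -⟩ := dvd_ext I hsymm ht
  obtain ⟨l1, l2, he1, h1, rfl⟩ := hexta
  obtain ⟨m1, m2, he2, h2, rfl⟩ := hextb
  subst he1
  rcases List.append_eq_append_iff.mp he2 with ⟨t', ht1, ht2⟩ | ⟨c, hc1, hc2⟩
  · -- m1 = l1 ++ t', a :: l2 = t' ++ b :: m2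
    cases t' with
    | nil => simp only [List.nil_append, List.cons.injEq] at ht2; exact absurd ht2.1 hab
    | cons a' t'' =>
      simp only [List.cons_append, List.cons.injEq] at ht2
      obtain ⟨rfl, rfl⟩ := ht2
      have hmem : a ∈ m1 := by
        rw [ht1]; exact List.mem_append_right _ (List.mem_cons_self)
      have hIab : I a b := h2 a hmem
      refine ⟨hIab, ?_⟩
      have hw : mk I (l1 ++ a :: (t'' ++ b :: m2)) = emb I a * mk I (l1 ++ (t'' ++ b :: m2)) :=
        ext_mk I ⟨l1, t'' ++ b :: m2, rfl, h1, rfl⟩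
      have hext2 : Ext I b (l1 ++ (t'' ++ b :: m2)) ((l1 ++ t'') ++ m2) := by
        refine ⟨l1 ++ t'', m2, by simp, ?_, rfl⟩
        intro x hx
        rcases List.mem_append.mp hx with hx | hx
        · exact h2 x (by rw [ht1]; exact List.mem_append_left _ hx)
        · exact h2 x (by rw [ht1]; exact List.mem_append_right _ (List.mem_cons_of_mem _ hx))
      have hw2 := ext_mk I hext2
      exact ⟨mk I ((l1 ++ t'') ++ m2), by rw [hw, hw2]⟩
  · -- l1 = m1 ++ c, b :: m2 = c ++ a :: l2
    cases c with
    | nil => simp only [List.nil_append, List.cons.injEq] at hc2; exact absurd hc2.1.symm hab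
    | cons b' c' =>
      simp only [List.cons_append, List.cons.injEq] at hc2
      obtain ⟨rfl, rfl⟩ := hc2
      have hmem : b ∈ l1 := by
        rw [hc1]; exact List.mem_append_right _ (List.mem_cons_self)
      have hIba : I b a := h1 b hmem
      have hIab : I a b := hsymm _ _ hIba
      refine ⟨hIab, ?_⟩
      have hw : mk I (m1 ++ b :: (c' ++ a :: l2)) = emb I b * mk I (m1 ++ (c' ++ a :: l2)) :=
        ext_mk I ⟨m1, c' ++ a :: l2, rfl, h2, rfl⟩
      have hext2 : Ext I a (m1 ++ (c' ++ a :: l2)) ((m1 ++ c') ++ l2) := by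
        refine ⟨m1 ++ c', l2, by simp, ?_, rfl⟩
        intro x hx
        rcases List.mem_append.mp hx with hx | hx
        · exact h1 x (by rw [hc1]; exact List.mem_append_left _ hx)
        · exact h1 x (by rw [hc1]; exact List.mem_append_right _ (List.mem_cons_of_mem _ hx))
      have hw2 := ext_mk I hext2
      have heq : l1 ++ a :: l2 = m1 ++ b :: (c' ++ a :: l2) := by rw [hc1]; simp
      refine ⟨mk I ((m1 ++ c') ++ l2), ?_⟩
      rw [heq, hw, hw2, ← mul_assoc, ← mul_assoc, emb_comm I hIab]

lemma perm_mk : ∀ {l l' : List α}, l.Perm l' →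
    (∀ x ∈ l, ∀ y ∈ l, x ≠ y → I x y) → mk I l = mk I l' := by
  intro l l' hp
  induction hp with
  | nil => intro _; rfl
  | cons x _ ih =>
    intro h
    rw [mk_cons, mk_cons, ih (fun a ha b hb hab =>
      h a (List.mem_cons_of_mem _ ha) b (List.mem_cons_of_mem _ hb) hab)]
  | swap x y l =>
    intro h
    by_cases hxy : x = y
    · subst hxy; rfl
    · have hI : I y x := h y (by simp) x (by simp) (Ne.symm hxy)
      rw [mk_cons, mk_cons, mk_cons, mk_cons, ← mul_assoc, ← mul_assoc, emb_comm I hI]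
  | trans h1 _ ih1 ih2 =>
    intro h
    exact (ih1 h).trans (ih2 (fun a ha b hb hab =>
      h a (h1.mem_iff.mpr ha) b (h1.mem_iff.mpr hb) hab))

lemma prod_map_of (l : List α) :
    (l.map (FreeMonoid.of : α → FreeMonoid α)).prod = FreeMonoid.ofList l := by
  induction l with
  | nil => rfl
  | cons a t ih => rw [List.map_cons, List.prod_cons, ih]; rfl

lemma ctr_eq_mk (c : Finset α) : ctr I c = mk I c.toList := by
  rw [ctr, prod_map_of]; rfl

lemma ctr_empty : ctr I (∅ : Finset α) = 1 := by
  rw [ctr_eq_mk, Finset.toList_empty, mk_nil]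

lemma ctr_insert [DecidableEq α] {a : α} {c : Finset α} (hc : IsCliq I (insert a c))
    (ha : a ∉ c) : ctr I (insert a c) = emb I a * ctr I c := by
  rw [ctr_eq_mk, ctr_eq_mk, ← mk_cons]
  apply perm_mk I (Finset.toList_insert ha)
  intro x hx y hy hxy
  exact hc x (Finset.mem_toList.mp hx) y (Finset.mem_toList.mp hy) hxy

lemma ctr_erase [DecidableEq α] {a : α} {c : Finset α} (hc : IsCliq I c) (ha : a ∈ c) :
    ctr I c = emb I a * ctr I (c.erase a) := by
  have h1 : insert a (c.erase a) = c := Finset.insert_erase ha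
  have hc2 : IsCliq I (insert a (c.erase a)) := by rw [h1]; exact hc
  calc ctr I c = ctr I (insert a (c.erase a)) := by rw [h1]
  _ = emb I a * ctr I (c.erase a) := ctr_insert I hc2 (Finset.notMem_erase a c)

lemma clique_dvd (hsymm : ∀ a b, I a b → I b a) (hirr : ∀ a, ¬ I a a) {c : Finset α}
    (hc : IsCliq I c) : ∀ {w : TM I}, (∀ a ∈ c, ∃ s, w = emb I a * s) →
      ∃ t, w = ctr I c * t := by
  classical
  induction c using Finset.induction_on with
  | empty => intro w _; exact ⟨w, by rw [ctr_empty, one_mul]⟩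
  | @insert a c ha ih =>
    intro w h
    obtain ⟨w', rfl⟩ := h a (Finset.mem_insert_self a c)
    have hc' : IsCliq I c := fun x hx y hy hxy =>
      hc x (Finset.mem_insert_of_mem hx) y (Finset.mem_insert_of_mem hy) hxy
    have hstep : ∀ b ∈ c, ∃ s, w' = emb I b * s := by
      intro b hb
      have hba : b ≠ a := fun h' => ha (h' ▸ hb)
      obtain ⟨s, hs⟩ := h b (Finset.mem_insert_of_mem hb)
      have := two_letter I hsymm hirr hba.symm ⟨w', rfl⟩ ⟨s, hs⟩
      obtain ⟨-, r, hr⟩ := this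
      exact ⟨r, cancel_letter I hsymm hirr hr⟩
    obtain ⟨t, ht⟩ := ih hc' hstep
    exact ⟨t, by rw [ctr_insert I hc ha, mul_assoc, ← ht]⟩

end TraceAux

section BoundaryLemmas

open TraceAux

variable (I : α → α → Prop)

lemma pref_mul (u v : TM I) : pref I u (u * v) := ⟨v, rfl⟩

lemma hseq_mono (x : HSeq I) : ∀ {m n}, m ≤ n → pref I (x.1 m) (x.1 n) := by
  intro m n h
  induction n, h using Nat.le_induction with
  | base => exact ⟨1, (mul_one _).symm⟩
  | succ n hmn ih => exact pref_trans I ih (x.2 n)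

lemma leT_mk (u : TM I) (x : HSeq I) :
    leT I u (Quotient.mk (hseqSetoid I) x) ↔ ∃ m, pref I u (x.1 m) := Iff.rfl

lemma leT_mono {u v : TM I} {ξ : GT I} (h : pref I u v) (h' : leT I v ξ) : leT I u ξ := by
  obtain ⟨x, rfl⟩ := Quotient.exists_rep ξ
  obtain ⟨m, hm⟩ := (leT_mk I v x).mp h'
  exact (leT_mk I u x).mpr ⟨m, pref_trans I h hm⟩

lemma escape (ξ : Bdry I) {u : TM I} (h : leT I u ξ.1) :
    ∃ a : α, leT I (u * emb I a) ξ.1 := by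
  obtain ⟨x, hx⟩ := Quotient.exists_rep ξ.1
  have hne : ξ.1 ≠ toGT I u := ξ.2 u
  rw [← hx] at hne h
  obtain ⟨m, hm⟩ := (leT_mk I u x).mp h
  set cst : HSeq I := ⟨fun _ => u, fun _ => ⟨1, (mul_one u).symm⟩⟩ with hcst
  have hnequiv : ¬ (preceq I x cst ∧ preceq I cst x) := by
    intro hequiv
    exact hne (Quotient.sound hequiv)
  have hpc : preceq I cst x := fun _ => ⟨m, hm⟩
  have : ¬ preceq I x cst := fun hh => hnequiv ⟨hh, hpc⟩
  rw [preceq] at this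
  push_neg at this
  obtain ⟨n, hn⟩ := this
  set N := max n m with hN
  have hxN : pref I u (x.1 N) := pref_trans I hm (hseq_mono I x (le_max_right n m))
  obtain ⟨w, hw⟩ := hxN
  have hwne : w ≠ 1 := by
    rintro rfl
    rw [mul_one] at hw
    have hp : pref I (x.1 n) u := by
      have h' := hseq_mono I x (le_max_left n m)
      rwa [hw] at h'
    exact hn 0 hp
  obtain ⟨l, hl⟩ := mk_surj I w
  cases l with
  | nil => exact absurd (hl ▸ mk_nil I) hwne.symm
  | cons a t =>
    refine ⟨a, ?_⟩
    rw [← hx]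
    exact (leT_mk I _ x).mpr ⟨N, ⟨mk I t, by rw [hw, ← hl, mk_cons, mul_assoc]⟩⟩

lemma step_indep (hsymm : ∀ a b, I a b → I b a) (hirr : ∀ a, ¬ I a a) (ξ : Bdry I)
    {u : TM I} {a b : α} (hab : a ≠ b) (ha : leT I (u * emb I a) ξ.1)
    (hb : leT I (u * emb I b) ξ.1) : I a b := by
  obtain ⟨x, hx⟩ := Quotient.exists_rep ξ.1
  rw [← hx] at ha hb
  obtain ⟨m, hm⟩ := (leT_mk I _ x).mp ha
  obtain ⟨k, hk⟩ := (leT_mk I _ x).mp hb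
  set N := max m k with hN
  obtain ⟨s, hs⟩ := pref_trans I hm (hseq_mono I x (le_max_left m k))
  obtain ⟨t, ht⟩ := pref_trans I hk (hseq_mono I x (le_max_right m k))
  rw [hs, mul_assoc, mul_assoc] at ht
  have hcanc : emb I a * s = emb I b * t := cancel_left I hsymm hirr ht
  exact (two_letter I hsymm hirr hab ⟨s, rfl⟩ ⟨t, hcanc⟩).1

lemma clique_join (hsymm : ∀ a b, I a b → I b a) (hirr : ∀ a, ¬ I a a) (ξ : Bdry I)
    {u : TM I} {c : Finset α} (hc : IsCliq I c) (hu : leT I u ξ.1)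
    (h : ∀ a ∈ c, leT I (u * emb I a) ξ.1) : leT I (u * ctr I c) ξ.1 := by
  classical
  obtain ⟨x, hx⟩ := Quotient.exists_rep ξ.1
  rw [← hx] at hu h ⊢
  have hch : ∀ a ∈ c, ∃ m, pref I (u * emb I a) (x.1 m) :=
    fun a ha => (leT_mk I _ x).mp (h a ha)
  choose g hg using hch
  obtain ⟨m0, hm0⟩ := (leT_mk I u x).mp hu
  set N := m0 ⊔ c.attach.sup (fun a => g a.1 a.2) with hNdef
  have hNu : pref I u (x.1 N) := pref_trans I hm0 (hseq_mono I x le_sup_left)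
  obtain ⟨w, hw⟩ := hNu
  have hwdvd : ∀ a ∈ c, ∃ s, w = emb I a * s := by
    intro a ha
    have hle1 : g a ha ≤ c.attach.sup (fun a => g a.1 a.2) :=
      Finset.le_sup (f := fun (x : {x // x ∈ c}) => g x.1 x.2) (Finset.mem_attach c ⟨a, ha⟩)
    have hle : g a ha ≤ N := le_trans hle1 le_sup_right
    obtain ⟨s, hs⟩ := pref_trans I (hg a ha) (hseq_mono I x hle)
    rw [hw, mul_assoc] at hs
    exact ⟨s, cancel_left I hsymm hirr hs⟩
  obtain ⟨t, ht⟩ := clique_dvd I hsymm hirr hc hwdvd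
  exact (leT_mk I _ x).mpr ⟨N, ⟨t, by rw [hw, ht, mul_assoc]⟩⟩

lemma mem_cyl_of_clique_mem (ξ : Bdry I) {u : TM I} {c : Finset α} (hc : IsCliq I c)
    {a : α} (ha : a ∈ c) (h : ξ ∈ cylSet I (u * ctr I c)) : ξ ∈ cylSet I (u * emb I a) := by
  classical
  have : u * ctr I c = (u * emb I a) * ctr I (c.erase a) := by
    rw [ctr_erase I hc ha, mul_assoc]
  exact leT_mono I ⟨ctr I (c.erase a), this⟩ h

lemma cyl_subset {u : TM I} (c : Finset α) : cylSet I (u * ctr I c) ⊆ cylSet I u :=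
  fun _ h => leT_mono I (pref_mul I u (ctr I c)) h

end BoundaryLemmas

open MeasureTheory

section KeyIdentity

open TraceAux MeasureTheory

variable (I : α → α → Prop)

lemma meas_cyl (v : TM I) : MeasurableSet (cylSet I v) :=
  MeasurableSpace.measurableSet_generateFrom ⟨v, rfl⟩

lemma key_identity [Fintype α] (hsymm : ∀ a b, I a b → I b a) (hirr : ∀ a, ¬ I a a)
    (ν : Measure (Bdry I)) [IsFiniteMeasure ν] (u : TM I) :
    (∑ c : Finset α,
      if IsCliq I c then (-1 : ℝ) ^ c.card * (ν (cylSet I (u * ctr I c))).toReal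
      else 0) = 0 := by
  classical
  have hpt : ∀ ξ : Bdry I,
      (∑ c : Finset α, if IsCliq I c then
        (cylSet I (u * ctr I c)).indicator (fun _ => ((-1:ℝ)) ^ c.card) ξ else 0) = 0 := by
    intro ξ
    by_cases hξ : ξ ∈ cylSet I u
    · set S : Finset α := Finset.univ.filter (fun a => ξ ∈ cylSet I (u * emb I a)) with hS
      have hmemS : ∀ a, a ∈ S ↔ ξ ∈ cylSet I (u * emb I a) := by
        intro a; simp [hS]
      have hScliq : IsCliq I S := fun a ha b hb hab =>
        step_indep I hsymm hirr ξ hab ((hmemS a).mp ha) ((hmemS b).mp hb)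
      have hSne : S ≠ ∅ := by
        obtain ⟨a, ha⟩ := escape I ξ hξ
        intro hS0
        have : a ∈ S := (hmemS a).mpr ha
        simp [hS0] at this
      have hiff : ∀ c : Finset α, IsCliq I c → (ξ ∈ cylSet I (u * ctr I c) ↔ c ⊆ S) := by
        intro c hc
        constructor
        · intro h a ha
          exact (hmemS a).mpr (mem_cyl_of_clique_mem I ξ hc ha h)
        · intro h
          exact clique_join I hsymm hirr ξ hc hξ (fun a ha => (hmemS a).mp (h ha))
      have hsub : ∀ c : Finset α, c ⊆ S → IsCliq I c := fun c hcs a ha b hb hab =>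
        hScliq a (hcs ha) b (hcs hb) hab
      have e1 : (∑ c : Finset α, if IsCliq I c then
          (cylSet I (u * ctr I c)).indicator (fun _ => ((-1:ℝ)) ^ c.card) ξ else 0)
          = ∑ c : Finset α, if c ⊆ S then ((-1:ℝ)) ^ c.card else 0 := by
        apply Finset.sum_congr rfl
        intro c _
        by_cases hc : IsCliq I c
        · rw [if_pos hc]
          by_cases hcs : c ⊆ S
          · rw [if_pos hcs, Set.indicator_of_mem ((hiff c hc).mpr hcs)]
          · rw [if_neg hcs, Set.indicator_of_notMem (fun hm => hcs ((hiff c hc).mp hm))]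
        · rw [if_neg hc, if_neg (fun hcs => hc (hsub c hcs))]
      have e2 : (∑ c : Finset α, if c ⊆ S then ((-1:ℝ)) ^ c.card else 0)
          = ∑ c ∈ S.powerset, ((-1:ℝ)) ^ c.card := by
        rw [← Finset.sum_filter]
        apply Finset.sum_congr _ (fun _ _ => rfl)
        ext c
        simp [Finset.mem_powerset]
      rw [e1, e2]
      have hz := Finset.sum_powerset_neg_one_pow_card (x := S)
      rw [if_neg hSne] at hz
      calc ∑ c ∈ S.powerset, ((-1:ℝ)) ^ c.card
          = ((∑ c ∈ S.powerset, ((-1:ℤ)) ^ c.card : ℤ) : ℝ) := by push_cast; rfl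
        _ = 0 := by rw [hz]; simp
    · apply Finset.sum_eq_zero
      intro c _
      by_cases hc : IsCliq I c
      · rw [if_pos hc, Set.indicator_of_notMem (fun hm => hξ (cyl_subset I c hm))]
      · rw [if_neg hc]
  have hint : ∀ c : Finset α, Integrable (fun ξ => if IsCliq I c then
      (cylSet I (u * ctr I c)).indicator (fun _ => ((-1:ℝ)) ^ c.card) ξ else 0) ν := by
    intro c
    by_cases hc : IsCliq I c
    · simp only [if_pos hc]
      exact (integrable_const _).indicator (meas_cyl I _)
    · simp only [if_neg hc]
      exact integrable_zero _ _ _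
  have h1 : ∀ c : Finset α, (∫ ξ, (if IsCliq I c then
      (cylSet I (u * ctr I c)).indicator (fun _ => ((-1:ℝ)) ^ c.card) ξ else 0) ∂ν)
      = (if IsCliq I c then ((-1:ℝ)) ^ c.card * (ν (cylSet I (u * ctr I c))).toReal else 0) := by
    intro c
    by_cases hc : IsCliq I c
    · simp only [if_pos hc]
      rw [integral_indicator_const _ (meas_cyl I _), smul_eq_mul, mul_comm]
      rfl
    · simp [hc]
  calc (∑ c : Finset α,
        if IsCliq I c then (-1:ℝ)^c.card * (ν (cylSet I (u * ctr I c))).toReal else 0)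
      = ∑ c : Finset α, ∫ ξ, (if IsCliq I c then
          (cylSet I (u * ctr I c)).indicator (fun _ => ((-1:ℝ)) ^ c.card) ξ else 0) ∂ν :=
        (Finset.sum_congr rfl (fun c _ => (h1 c).symm))
    _ = ∫ ξ, (∑ c : Finset α, if IsCliq I c then
          (cylSet I (u * ctr I c)).indicator (fun _ => ((-1:ℝ)) ^ c.card) ξ else 0) ∂ν :=
        (integral_finset_sum Finset.univ (fun c _ => hint c)).symm
    _ = ∫ _ξ, (0:ℝ) ∂ν := by simp_rw [hpt]
    _ = 0 := integral_zero _ _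

end KeyIdentity

/-- Finite measures on the boundary yield Möbius harmonic functions:
`λ(u) = ν(↑u)/P(↑u)` is Möbius harmonic; equivalently
`∑_c (-1)^{|c|} ν(↑(u·c)) = 0` for all `u`. -/
theorem finite_measure_harmonic {α : Type*} [Fintype α] (I : α → α → Prop)
    (hsymm : ∀ a b, I a b → I b a) (hirr : ∀ a, ¬ I a a)
    (P : Measure (Bdry I)) [IsProbabilityMeasure P]
    (hpos : ∀ u : TM I, 0 < P (cylSet I u))
    (hmult : ∀ u v : TM I, P (cylSet I (u * v)) = P (cylSet I u) * P (cylSet I v))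
    (ν : Measure (Bdry I)) [IsFiniteMeasure ν]
    (lam : TM I → ℝ)
    (hlam : ∀ u : TM I, lam u = (ν (cylSet I u)).toReal / (P (cylSet I u)).toReal) :
    (∀ u : TM I,
      (∑ c : Finset α,
        if IsCliq I c then
          (-1 : ℝ) ^ c.card * (P (cylSet I (ctr I c))).toReal * lam (u * ctr I c)
        else 0) = 0) ∧
    (∀ u : TM I,
      (∑ c : Finset α,
        if IsCliq I c then (-1 : ℝ) ^ c.card * (ν (cylSet I (u * ctr I c))).toReal
        else 0) = 0) := by
  classical
  have key := fun u => key_identity I hsymm hirr ν u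
  refine ⟨?_, key⟩
  intro u
  have hpu : (0:ℝ) < (P (cylSet I u)).toReal :=
    ENNReal.toReal_pos (hpos u).ne' (measure_ne_top P _)
  have hterm : ∀ c : Finset α,
      (if IsCliq I c then
        (-1:ℝ)^c.card * (P (cylSet I (ctr I c))).toReal * lam (u * ctr I c) else 0)
      = ((P (cylSet I u)).toReal)⁻¹ *
        (if IsCliq I c then (-1:ℝ)^c.card * (ν (cylSet I (u * ctr I c))).toReal else 0) := by
    intro c
    by_cases hc : IsCliq I c
    · rw [if_pos hc, if_pos hc, hlam]
      have hmul : (P (cylSet I (u * ctr I c))).toReal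
          = (P (cylSet I u)).toReal * (P (cylSet I (ctr I c))).toReal := by
        rw [hmult u (ctr I c), ENNReal.toReal_mul]
      have hpc : (0:ℝ) < (P (cylSet I (ctr I c))).toReal :=
        ENNReal.toReal_pos (hpos _).ne' (measure_ne_top P _)
      rw [hmul]
      field_simp
    · simp [hc]
  rw [Finset.sum_congr rfl (fun c _ => hterm c), ← Finset.mul_sum, key u, mul_zero]
end
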